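/- (Stationary distribution of random walk with jumps.) Let α > 0 and n ≥ 1. The probability vector π with π_i = (d_i + α)/(2|E| + nα) is stationary for the RWwJ transition matrix P: for every j ∈ U, ∑_{i∈U} π_i P_{ij} = π_j. In particular, in steady state a node u is sampled with probability proportional to d_u + α. -/

import Mathlib

open Finset

/-- Stationary distribution of the random walk with jumps:
the probability vector `π i = (d i + α) / (2|E| + n α)` is stationary for the
RWwJ transition matrix `P`, i.e. `∑ i, π i * P i j = π j` for every `j`. -/
theorem rwwj_stationary
    {U : Type*} [Fintype U] [DecidableEq U]
    (G : SimpleGraph U) [DecidableRel G.Adj]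
    (α : ℝ) (hα : 0 < α) (hn : 1 ≤ Fintype.card U)
    (P : U → U → ℝ)
    (hP : ∀ i j, P i j =
      if G.Adj i j then (α / (Fintype.card U : ℝ) + 1) / ((G.degree i : ℝ) + α)
      else (α / (Fintype.card U : ℝ)) / ((G.degree i : ℝ) + α))
    (pi : U → ℝ)
    (hpi : ∀ i, pi i = ((G.degree i : ℝ) + α)
        / (2 * (G.edgeFinset.card : ℝ) + (Fintype.card U : ℝ) * α)) :
    ∀ j : U, ∑ i : U, pi i * P i j = pi j := by
  intro j
  have hn' : (0:ℝ) < (Fintype.card U : ℝ) := by exact_mod_cast lt_of_lt_of_le one_pos hn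
  set Z : ℝ := 2 * (G.edgeFinset.card : ℝ) + (Fintype.card U : ℝ) * α with hZ
  have key : ∀ i, pi i * P i j =
      (α / (Fintype.card U : ℝ) + if G.Adj i j then 1 else 0) / Z := by
    intro i
    have hd : ((G.degree i : ℝ) + α) ≠ 0 := by positivity
    rw [hpi, hP]
    split <;> field_simp <;> ring
  simp_rw [key]
  rw [← Finset.sum_div, Finset.sum_add_distrib, Finset.sum_const, Finset.sum_boole]
  have hfilt : (Finset.univ.filter fun i => G.Adj i j).card = G.degree j := by
    rw [← SimpleGraph.card_neighborFinset_eq_degree]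
    congr 1
    ext i
    simp [SimpleGraph.adj_comm]
  rw [hfilt, hpi, Finset.card_univ]
  field_simp
  rw [nsmul_eq_mul, mul_div_cancel₀ _ hn'.ne']
  ring
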